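/- (Unbiasedness of the CDF estimator F̂) For every integer n ≥ 2, every x ∈ ℕ and every θ ∈ (0,1), ∑_{t=0}^∞ (∑_{w=0}^{min(x,t)} p(w)·A_{n−1}(t−w)/A_n(t)) · h(θ)^n·A_n(t)·(1−θ)^t = ∑_{w=0}^x h(θ)·p(w)·(1−θ)^w = F(x); that is, the estimator F̂(x) = ∑_{w=0}^{min(x,T)} p(w)·A_{n−1}(T−w)/A_n(T) is an unbiased estimator of the CDF F(x) when T has the PMF f_T(t) = h(θ)^n·A_n(t)·(1−θ)^t. -/

import Mathlib

set_option maxHeartbeats 1000000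


open scoped BigOperators

/-- `p x = ∑_{k=1}^r a_{k-1} (k-1)! C(x+k-1, x)` (index shifted: `k ∈ range r` stands for `k-1`). -/
noncomputable def p (r : ℕ) (a : ℕ → ℝ) (x : ℕ) : ℝ :=
  ∑ k ∈ Finset.range r, a k * (Nat.factorial k : ℝ) * (Nat.choose (x + k) x : ℝ)

/-- `h θ = 1 / ∑_{k=1}^r a_{k-1} (k-1)! / θ^k` (index shifted). -/
noncomputable def h (r : ℕ) (a : ℕ → ℝ) (θ : ℝ) : ℝ :=
  1 / ∑ k ∈ Finset.range r, a k * (Nat.factorial k : ℝ) / θ ^ (k + 1)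

/-- `A n t = ∑_{y₁+⋯+y_r = n} (n!/(y₁!⋯y_r!)) (∏_{k=1}^r (a_{k-1}(k-1)!)^{y_k})
    C(t + ∑_{k=1}^r k y_k − 1, t)`. -/
noncomputable def A (r : ℕ) (a : ℕ → ℝ) (n t : ℕ) : ℝ :=
  ∑ y ∈ Finset.Nat.antidiagonalTuple r n,
    ((Nat.factorial n : ℝ) / ∏ k : Fin r, (Nat.factorial (y k) : ℝ)) *
      (∏ k : Fin r, (a (k : ℕ) * (Nat.factorial (k : ℕ) : ℝ)) ^ (y k)) *
      (Nat.choose (t + (∑ k : Fin r, ((k : ℕ) + 1) * y k) - 1) t : ℝ)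


/-- Negative binomial series. -/
lemma negbinom_hasSum {z : ℝ} (hz : |z| < 1) (s : ℕ) (hs : 1 ≤ s) :
    HasSum (fun t : ℕ => (Nat.choose (t + s - 1) t : ℝ) * z ^ t) (1 / (1 - z) ^ s) := by
  obtain ⟨m, rfl⟩ : ∃ m, s = m + 1 := ⟨s - 1, by omega⟩
  have H := hasSum_choose_mul_geometric_of_norm_lt_one (𝕜 := ℝ) m (by simpa using hz)
  convert H using 2 with t
  case e'_3 => rfl
  have h1 : t + (m + 1) - 1 = t + m := by omega
  rw [h1, Nat.choose_symm_add]

/-- The key generating-function identity for `A`. -/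
lemma A_hasSum (r : ℕ) (a : ℕ → ℝ) (m : ℕ) (hm : 1 ≤ m) {θ : ℝ} (hθ0 : 0 < θ) (hθ1 : θ < 1) :
    HasSum (fun t : ℕ => A r a m t * (1 - θ) ^ t)
      ((∑ k ∈ Finset.range r, a k * (Nat.factorial k : ℝ) / θ ^ (k + 1)) ^ m) := by
  have hz : |1 - θ| < 1 := by rw [abs_lt]; constructor <;> linarith
  have hθ' : θ ≠ 0 := hθ0.ne'
  have key : (∑ k ∈ Finset.range r, a k * (Nat.factorial k : ℝ) / θ ^ (k + 1)) ^ m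
      = ∑ y ∈ Finset.Nat.antidiagonalTuple r m,
          ((Nat.factorial m : ℝ) / ∏ k : Fin r, (Nat.factorial (y k) : ℝ)) *
            (∏ k : Fin r, (a (k : ℕ) * (Nat.factorial (k : ℕ) : ℝ)) ^ (y k)) /
            θ ^ (∑ k : Fin r, ((k : ℕ) + 1) * y k) := by
    rw [Finset.sum_range (fun k => a k * (Nat.factorial k : ℝ) / θ ^ (k + 1)),
      Finset.sum_pow_eq_sum_piAntidiag,
      Finset.piAntidiag_univ_fin_eq_antidiagonalTuple]
    refine Finset.sum_congr rfl fun y hy => ?_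
    have hyS : ∑ k : Fin r, y k = m := Finset.Nat.mem_antidiagonalTuple.mp hy
    have hQ : (∏ k : Fin r, (Nat.factorial (y k) : ℝ)) ≠ 0 :=
      Finset.prod_ne_zero_iff.mpr fun k _ => Nat.cast_ne_zero.mpr (Nat.factorial_ne_zero _)
    have hmul : ((Nat.multinomial Finset.univ y : ℝ)) =
        (Nat.factorial m : ℝ) / ∏ k : Fin r, (Nat.factorial (y k) : ℝ) := by
      rw [eq_div_iff hQ]
      have hspec := Nat.multinomial_spec (Finset.univ : Finset (Fin r)) y
      rw [hyS] at hspec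
      calc ((Nat.multinomial Finset.univ y : ℕ) : ℝ) * ∏ k : Fin r, (Nat.factorial (y k) : ℝ)
          = (((∏ k : Fin r, Nat.factorial (y k)) * Nat.multinomial Finset.univ y : ℕ) : ℝ) := by
            push_cast; ring
        _ = (Nat.factorial m : ℝ) := by rw [hspec]
    have hprod : ∏ k : Fin r, (a (k : ℕ) * (Nat.factorial (k : ℕ) : ℝ) / θ ^ ((k : ℕ) + 1)) ^ y k
        = (∏ k : Fin r, (a (k : ℕ) * (Nat.factorial (k : ℕ) : ℝ)) ^ (y k)) /
            θ ^ (∑ k : Fin r, ((k : ℕ) + 1) * y k) := by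
      rw [← Finset.prod_pow_eq_pow_sum]
      rw [← Finset.prod_div_distrib]
      refine Finset.prod_congr rfl fun k _ => ?_
      rw [div_pow, ← pow_mul]
    rw [hmul, hprod, ← mul_div_assoc]
  rw [key]
  simp only [A, Finset.sum_mul]
  refine hasSum_sum fun y hy => ?_
  have hyS : ∑ k : Fin r, y k = m := Finset.Nat.mem_antidiagonalTuple.mp hy
  set S := ∑ k : Fin r, ((k : ℕ) + 1) * y k with hS
  have hS1 : 1 ≤ S := by
    calc 1 ≤ m := hm
    _ = ∑ k : Fin r, y k := hyS.symm
    _ ≤ S := Finset.sum_le_sum fun k _ => Nat.le_mul_of_pos_left _ (Nat.succ_pos _)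
  set c : ℝ := ((Nat.factorial m : ℝ) / ∏ k : Fin r, (Nat.factorial (y k) : ℝ)) *
      (∏ k : Fin r, (a (k : ℕ) * (Nat.factorial (k : ℕ) : ℝ)) ^ (y k)) with hc
  have H := (negbinom_hasSum hz S hS1).mul_left c
  have h1 : (1 : ℝ) - (1 - θ) = θ := by ring
  rw [h1] at H
  have h2 : c * (1 / θ ^ S) = c / θ ^ S := by ring
  rw [h2] at H
  exact H.congr_fun fun t => by ring

/-- Positivity of `A`. -/
lemma A_pos (r : ℕ) (hr : 1 ≤ r) (a : ℕ → ℝ) (ha : ∀ k, 0 ≤ a k) (ha0 : 0 < a 0)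
    (m : ℕ) (hm : 1 ≤ m) (t : ℕ) : 0 < A r a m t := by
  unfold A
  set i0 : Fin r := ⟨0, hr⟩ with hi0
  set y0 : Fin r → ℕ := fun k => if k = i0 then m else 0 with hy0
  have hsum0 : ∑ k : Fin r, y0 k = m := by
    rw [hy0]
    simp [Finset.sum_ite_eq']
  refine Finset.sum_pos' (fun y _ => ?_) ⟨y0, ?_, ?_⟩
  · refine mul_nonneg (mul_nonneg (div_nonneg (Nat.cast_nonneg _)
      (Finset.prod_nonneg fun k _ => Nat.cast_nonneg _))
      (Finset.prod_nonneg fun k _ => pow_nonneg (mul_nonneg (ha _) (Nat.cast_nonneg _)) _))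
      (Nat.cast_nonneg _)
  · exact Finset.Nat.mem_antidiagonalTuple.mpr hsum0
  · have hSv : (∑ k : Fin r, ((k : ℕ) + 1) * y0 k) = m := by
      have hterm : ∀ k : Fin r, ((k : ℕ) + 1) * y0 k = if k = i0 then m else 0 := by
        intro k
        rcases eq_or_ne k i0 with hk | hk
        · subst hk
          have : ((i0 : ℕ)) = 0 := rfl
          simp [hy0, this]
        · simp [hy0, hk]
      rw [Finset.sum_congr rfl fun k _ => hterm k]
      simp [Finset.sum_ite_eq']
    refine mul_pos (mul_pos (div_pos ?_ (Finset.prod_pos fun k _ => ?_))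
      (Finset.prod_pos fun k _ => ?_)) ?_
    · exact_mod_cast Nat.factorial_pos m
    · exact_mod_cast Nat.factorial_pos (y0 k)
    · rcases eq_or_ne k i0 with hk | hk
      · subst hk
        have h0 : ((i0 : ℕ)) = 0 := rfl
        have hy : y0 i0 = m := by simp [hy0]
        rw [hy, h0]
        simp only [Nat.factorial_zero, Nat.cast_one, mul_one]
        exact pow_pos ha0 m
      · have hy : y0 k = 0 := by simp [hy0, hk]
        rw [hy, pow_zero]; exact one_pos
    · rw [hSv]
      exact_mod_cast Nat.choose_pos (by omega)

/-- Unbiasedness of the CDF estimator `F̂`: For every integer `n ≥ 2`,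
every `x ∈ ℕ` and every `θ ∈ (0,1)`,
`∑_{t=0}^∞ (∑_{w=0}^{min(x,t)} p(w) A_{n−1}(t−w)/A_n(t)) · h(θ)^n A_n(t) (1−θ)^t
   = ∑_{w=0}^x h(θ) p(w) (1−θ)^w = F(x)`;
i.e. `F̂(x) = ∑_{w=0}^{min(x,T)} p(w) A_{n−1}(T−w)/A_n(T)` is an unbiased estimator of the
CDF `F(x)` when `T` has PMF `f_T(t) = h(θ)^n A_n(t) (1−θ)^t`. -/
theorem cdf_estimator_unbiased (r : ℕ) (hr : 1 ≤ r) (a : ℕ → ℝ) (ha : ∀ k, 0 ≤ a k)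
    (ha0 : 0 < a 0) (n : ℕ) (hn : 2 ≤ n) (x : ℕ) (θ : ℝ) (hθ : θ ∈ Set.Ioo (0 : ℝ) 1) :
    HasSum
      (fun t : ℕ =>
        (∑ w ∈ Finset.range (min x t + 1), p r a w * A r a (n - 1) (t - w) / A r a n t) *
          (h r a θ ^ n * A r a n t * (1 - θ) ^ t))
      (∑ w ∈ Finset.range (x + 1), h r a θ * p r a w * (1 - θ) ^ w) := by
  obtain ⟨hθ0, hθ1⟩ := hθ
  set B : ℝ := ∑ k ∈ Finset.range r, a k * (Nat.factorial k : ℝ) / θ ^ (k + 1) with hBdef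
  have hB : 0 < B := by
    refine Finset.sum_pos' (fun k _ => div_nonneg (mul_nonneg (ha k) (Nat.cast_nonneg _))
      (pow_nonneg hθ0.le _)) ⟨0, Finset.mem_range.mpr hr, ?_⟩
    simp only [Nat.factorial_zero, Nat.cast_one, mul_one, zero_add, pow_one]
    exact div_pos ha0 hθ0
  have hhB : h r a θ = 1 / B := rfl
  set G : ℕ → ℕ → ℝ := fun w t =>
    if w ≤ t then (h r a θ ^ n * p r a w * (1 - θ) ^ w) *
      (A r a (n - 1) (t - w) * (1 - θ) ^ (t - w)) else 0 with hG
  have hfun : ∀ t : ℕ,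
      (∑ w ∈ Finset.range (min x t + 1), p r a w * A r a (n - 1) (t - w) / A r a n t) *
        (h r a θ ^ n * A r a n t * (1 - θ) ^ t)
      = ∑ w ∈ Finset.range (x + 1), G w t := by
    intro t
    have hA : A r a n t ≠ 0 := (A_pos r hr a ha ha0 n (by omega) t).ne'
    rw [Finset.sum_mul]
    rw [← Finset.sum_subset (Finset.range_subset_range.mpr (by omega :
        min x t + 1 ≤ x + 1)) (fun w hw hw' => ?_)]
    · refine Finset.sum_congr rfl fun w hw => ?_
      have hwt : w ≤ t := by
        have := Finset.mem_range.mp hw; omega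
      rw [hG]
      simp only [hwt, if_true]
      have hpow : (1 - θ) ^ (t - w) * (1 - θ) ^ w = (1 - θ) ^ t := by
        rw [← pow_add]; congr 1; omega
      field_simp
      rw [← hpow]; ring
    · have hwx : w < x + 1 := Finset.mem_range.mp hw
      have hwm : ¬ w < min x t + 1 := fun hc => hw' (Finset.mem_range.mpr hc)
      have hwt : ¬ w ≤ t := by omega
      rw [hG]
      simp [hwt]
  have hsum : ∀ w ∈ Finset.range (x + 1),
      HasSum (fun t => G w t) (h r a θ * p r a w * (1 - θ) ^ w) := by
    intro w _
    have hA' := A_hasSum r a (n - 1) (by omega) hθ0 hθ1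
    have base := hA'.mul_left (h r a θ ^ n * p r a w * (1 - θ) ^ w)
    have hinj : Function.Injective (fun s : ℕ => s + w) := fun s1 s2 hs => by
      simpa using hs
    have h0 : ∀ t ∉ Set.range (fun s : ℕ => s + w), G w t = 0 := by
      intro t ht
      have hwt : ¬ w ≤ t := fun hc => ht ⟨t - w, by simp; omega⟩
      simp [hG, hwt]
    have hcomp : ((fun t => G w t) ∘ (fun s : ℕ => s + w)) =
        fun s => (h r a θ ^ n * p r a w * (1 - θ) ^ w) *
          (A r a (n - 1) s * (1 - θ) ^ s) := by
      funext s
      simp only [Function.comp, hG, Nat.le_add_left w s, if_true,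
        Nat.add_sub_cancel]
    have hval : h r a θ ^ n * p r a w * (1 - θ) ^ w * B ^ (n - 1)
        = h r a θ * p r a w * (1 - θ) ^ w := by
      rw [hhB]
      have hBn : (1 / B) ^ n * B ^ (n - 1) = 1 / B := by
        rw [div_pow, one_pow, div_mul_eq_mul_div, one_mul,
          div_eq_div_iff (pow_ne_zero n hB.ne') hB.ne', one_mul, ← pow_succ]
        congr 1; omega
      calc (1 / B) ^ n * p r a w * (1 - θ) ^ w * B ^ (n - 1)
          = ((1 / B) ^ n * B ^ (n - 1)) * p r a w * (1 - θ) ^ w := by ring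
        _ = (1 / B) * p r a w * (1 - θ) ^ w := by rw [hBn]
    rw [← hval]
    refine (hinj.hasSum_iff h0).mp ?_
    rw [hcomp]
    exact base
  have total := hasSum_sum hsum
  have : (fun t : ℕ =>
      (∑ w ∈ Finset.range (min x t + 1), p r a w * A r a (n - 1) (t - w) / A r a n t) *
        (h r a θ ^ n * A r a n t * (1 - θ) ^ t)) = fun t => ∑ w ∈ Finset.range (x + 1), G w t :=
    funext hfun
  rw [this]
  exact total
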